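/- Let G = (V,E) be a hypergraph with G = cl(G), i.e., E = cl(E). If G is α-acyclic, then CER(G) = MP(G). -/

import Mathlib

open Finset

namespace BPO

variable {N : Type*} [DecidableEq N]

/-- Coordinate index set of `ℝ^{V ∪ E}`: one coordinate for each edge, and one
coordinate (labelled by the corresponding singleton) for each node. -/
def coords (V : Finset N) (E : Finset (Finset N)) : Finset (Finset N) :=
  E ∪ V.image fun v => {v}

/-- A point of `ℝ^{V ∪ E}`. -/
abbrev Pt (V : Finset N) (E : Finset (Finset N)) : Type _ :=
  {p : Finset N // p ∈ coords V E} → ℝ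

/-- Evaluate a coordinate of a point, with the convention `z_∅ = 1`.
For a node `v`, the coordinate `z_v` is `ev z {v}`. -/
noncomputable def ev {V : Finset N} {E : Finset (Finset N)} (z : Pt V E)
    (p : Finset N) : ℝ :=
  if h : p ∈ coords V E then z ⟨p, h⟩ else if p = ∅ then 1 else 0

/-- The multilinear set `S(G)`: binary points with `z_e = ∏_{v ∈ e} z_v`. -/
def mlSet (V : Finset N) (E : Finset (Finset N)) : Set (Pt V E) :=
  { z | (∀ p, z p = 0 ∨ z p = 1) ∧ ∀ e ∈ E, ev z e = ∏ v ∈ e, ev z {v} }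

/-- The multilinear polytope `MP(G)`. -/
noncomputable def MP (V : Finset N) (E : Finset (Finset N)) : Set (Pt V E) :=
  convexHull ℝ (mlSet V E)

/-- The completion `cl(E) = { f ⊆ e : |f| ≥ 2, e ∈ E }`. -/
def clE (E : Finset (Finset N)) : Finset (Finset N) :=
  (E.biUnion Finset.powerset).filter fun g => 2 ≤ g.card

/-- The set of maximal edges of `E`. -/
def maxEdges (E : Finset (Finset N)) : Finset (Finset N) :=
  E.filter fun e => ∀ e' ∈ E, e ⊆ e' → e = e'

/-- The linear function `ψ(U, e)`. -/
noncomputable def psi {V : Finset N} {E : Finset (Finset N)} (z : Pt V E)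
    (U e : Finset N) : ℝ :=
  ∑ W ∈ U.powerset, (if Even W.card then (1 : ℝ) else -1) * ev z ((e \ U) ∪ W)

/-- The complete edge relaxation constraints (`ψ(U,e) ≥ 0` for `U ⊆ e`, `e` a
maximal edge of `E`), imposed on the coordinate space `ℝ^{V ∪ F}`. -/
noncomputable def cerSet (V : Finset N) (E F : Finset (Finset N)) : Set (Pt V F) :=
  { z | ∀ e ∈ maxEdges E, ∀ U ⊆ e, 0 ≤ psi z U e }

/-- The complete edge relaxation `CER(G) ⊆ ℝ^{V ∪ cl(E)}`. -/
noncomputable def CER (V : Finset N) (E : Finset (Finset N)) : Set (Pt V (clE E)) :=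
  cerSet V E (clE E)

/-- Projection onto the coordinates of `ℝ^{V₂ ∪ E₂}`. -/
noncomputable def res (V₂ : Finset N) (E₂ : Finset (Finset N)) {V₁ : Finset N}
    {E₁ : Finset (Finset N)} (z : Pt V₁ E₁) : Pt V₂ E₂ :=
  fun p => ev z p.1

/-- `CER(G)` is an extension of `MP(G)`: `MP(G)` is the image of `CER(G)` under
the projection of `ℝ^{V ∪ cl(E)}` onto `ℝ^{V ∪ E}`. -/
def IsExtension (V : Finset N) (E : Finset (Finset N)) : Prop :=
  MP V E = (fun z : Pt V (clE E) => res V E z) '' CER V E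

/-- The running intersection property for the family `E`. -/
def RunningIntersection (E : Finset (Finset N)) : Prop :=
  ∃ L : List (Finset N), L.Nodup ∧ L.toFinset = E ∧
    ∀ k, 0 < k → k < L.length →
      ∃ j < k, L.getD k ∅ ∩ (L.take k).foldr (· ∪ ·) ∅ ⊆ L.getD j ∅

/-- A hypergraph is α-acyclic if its edge set has the running intersection property. -/
def AlphaAcyclic (E : Finset (Finset N)) : Prop := RunningIntersection E

/-- `s_i = e_i ∩ e_{i+1}` for a cyclic sequence `e_1, …, e_ℓ, e_{ℓ+1} = e_1`. -/
def cycS (c : ℕ → Finset N) (ℓ i : ℕ) : Finset N :=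
  c i ∩ c (if i = ℓ then 1 else i + 1)

/-- A simple cycle `e_1, …, e_ℓ, e_{ℓ+1} = e_1` of length `ℓ`. -/
def IsSimpleCycle (E : Finset (Finset N)) (ℓ : ℕ) (c : ℕ → Finset N) : Prop :=
  3 ≤ ℓ ∧ (∀ i, 1 ≤ i → i ≤ ℓ → c i ∈ E) ∧
    ∀ i j k, 1 ≤ i → i < j → j < k → k ≤ ℓ → ∀ e ∈ E,
      ((cycS c ℓ i ∪ cycS c ℓ j ∪ cycS c ℓ k) \ e).Nonempty

/-- An α-cycle `e_1, …, e_ℓ, e_{ℓ+1} = e_1` of length `ℓ`. -/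
def IsAlphaCycle (E : Finset (Finset N)) (ℓ : ℕ) (c : ℕ → Finset N) : Prop :=
  3 ≤ ℓ ∧ (∀ i, 1 ≤ i → i ≤ ℓ → c i ∈ E) ∧
    (∀ i j, 1 ≤ i → i ≤ ℓ → 1 ≤ j → j ≤ ℓ → i ≠ j → (c i \ c j).Nonempty) ∧
    ∀ i, 1 ≤ i → i ≤ ℓ → ∀ e ∈ E,
      ((cycS c ℓ (if i = 1 then ℓ else i - 1) ∪ cycS c ℓ i ∪
        cycS c ℓ (if i = ℓ then 1 else i + 1)) \ e).Nonempty

/-- A chordless α-cycle: no subsequence `e_i, …, e_j, ẽ, e_i` is an α-cycle. -/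
def Chordless (E : Finset (Finset N)) (ℓ : ℕ) (c : ℕ → Finset N) : Prop :=
  ∀ i j, 1 ≤ i → i < j → j ≤ ℓ → j - i ≤ ℓ - 3 →
    ∀ g ∈ E, (∀ k, i ≤ k → k ≤ j → g ≠ c k) →
      ¬ IsAlphaCycle E (j - i + 2) fun k => if k ≤ j - i + 1 then c (i + k - 1) else g

/-- The edge set `E_{V'}` of the subhypergraph induced by `W`. -/
def indE (E : Finset (Finset N)) (W : Finset N) : Finset (Finset N) :=
  (E.image fun e => e ∩ W).filter fun g => 2 ≤ g.card

/-- The edge set `E_{w→u}` obtained by contracting `w` to `u`. -/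
def contrE (E : Finset (Finset N)) (u w : N) : Finset (Finset N) :=
  E.filter (fun e => w ∉ e) ∪
    (E.filter fun e => w ∈ e ∧ e ≠ {u, w}).image fun e => e.erase w ∪ {u}

/-- The edge set `E'` obtained by expanding `w` to `f`. -/
def expE (E : Finset (Finset N)) (w : N) (f : Finset N) : Finset (Finset N) :=
  insert f
    (E.filter (fun e => w ∉ e) ∪ (E.filter fun e => w ∈ e).image fun e => e.erase w ∪ f)

/-- The coordinate renaming `x_w → z_f`, `x_v → z_v`, `x_e → z_e` (`w ∉ e`),
`x_e → z_{(e∖{w}) ⊎ f}` (`w ∈ e`) used in the expansion operation. -/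
def expRen (w : N) (f : Finset N) (p : Finset N) : Finset N :=
  if p = {w} then f else if w ∈ p then p.erase w ∪ f else p

-- ===== auxiliary lemmas =====
set_option linter.unusedSectionVars false
set_option linter.unusedVariables false
set_option maxHeartbeats 1000000

noncomputable def sg (W : Finset N) : ℝ := if Even W.card then 1 else -1

noncomputable def mu (F : Finset N → ℝ) (a T : Finset N) : ℝ :=
  ∑ W ∈ (a \ T).powerset, sg W * F (T ∪ W)

lemma sg_empty : sg (∅ : Finset N) = 1 := by simp [sg]

lemma sg_insert {a : N} {W : Finset N} (ha : a ∉ W) : sg (insert a W) = - sg W := by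
  simp only [sg, card_insert_of_notMem ha, Nat.even_add_one]
  by_cases h : Even W.card <;> simp [h]

lemma mu_self (F : Finset N → ℝ) (T : Finset N) : mu F T T = F T := by
  simp [mu, sg_empty]

lemma sum_filter_inter_eq (g : Finset N → ℝ) {e T : Finset N} (hT : T ⊆ e) :
    ∑ A ∈ e.powerset.filter (fun A => A ∩ e = T), g A = g T := by
  have h1 : e.powerset.filter (fun A => A ∩ e = T) = e.powerset.filter (fun A => A = T) := by
    apply filter_congr
    intro A hA
    rw [mem_powerset] at hA
    rw [inter_eq_left.2 hA]
  rw [h1, filter_eq', if_pos (mem_powerset.2 hT), sum_singleton]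

/-- one-step marginalization for `mu` -/
lemma mu_insert_step (F : Finset N → ℝ) {a : N} {e T : Finset N} (ha : a ∉ e) (hT : T ⊆ e) :
    mu F (insert a e) T + mu F (insert a e) (insert a T) = mu F e T := by
  have haT : a ∉ T := fun h => ha (hT h)
  have h1 : insert a e \ T = insert a (e \ T) := by
    rw [insert_sdiff_of_notMem _ haT]
  have h2 : insert a e \ insert a T = e \ T := by
    ext x
    simp only [mem_sdiff, mem_insert, not_or]
    constructor
    · rintro ⟨x1 | x2, hx3, hx4⟩
      · exact absurd x1 hx3
      · exact ⟨x2, hx4⟩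
    · rintro ⟨hx, hxT⟩
      exact ⟨Or.inr hx, fun h => ha (h ▸ hx), hxT⟩
  have hanotdiff : a ∉ e \ T := fun h => ha (mem_sdiff.1 h).1
  rw [mu, mu, mu, h1, h2, Finset.sum_powerset_insert hanotdiff]
  have hcancel : ∑ W ∈ (e \ T).powerset, sg (insert a W) * F (T ∪ insert a W)
      = - ∑ W ∈ (e \ T).powerset, sg W * F (insert a T ∪ W) := by
    rw [← Finset.sum_neg_distrib]
    apply sum_congr rfl
    intro W hW
    rw [mem_powerset] at hW
    have haW : a ∉ W := fun h => hanotdiff (hW h)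
    rw [sg_insert haW]
    have : T ∪ insert a W = insert a T ∪ W := by
      simp [Finset.union_insert, Finset.insert_union]
    rw [this]
    ring
  rw [hcancel]
  ring

/-- parametrize fibers of `∩ u` in the powerset of `u ∪ r` -/
lemma sum_fiber_union (g : Finset N → ℝ) {u r A : Finset N} (hA : A ⊆ u) (hdisj : Disjoint u r) :
    ∑ S ∈ (u ∪ r).powerset.filter (fun S => S ∩ u = A), g S = ∑ B ∈ r.powerset, g (A ∪ B) := by
  apply Finset.sum_bij' (i := fun S _ => S \ u) (j := fun B _ => A ∪ B)
  · intro S hS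
    rw [mem_filter, mem_powerset] at hS
    rw [mem_powerset]
    intro x hx
    rw [mem_sdiff] at hx
    rcases mem_union.1 (hS.1 hx.1) with h | h
    · exact absurd h hx.2
    · exact h
  · intro B hB
    rw [mem_powerset] at hB
    rw [mem_filter, mem_powerset]
    constructor
    · exact union_subset (hA.trans subset_union_left) (hB.trans subset_union_right)
    · ext x
      simp only [mem_inter, mem_union]
      constructor
      · rintro ⟨hx1 | hx2, hxu⟩
        · exact hx1
        · exact absurd hxu (disjoint_right.1 hdisj (hB hx2))
      · intro hx; exact ⟨Or.inl hx, hA hx⟩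
  · intro S hS
    rw [mem_filter] at hS
    rw [← hS.2]
    ext x
    simp only [mem_union, mem_inter, mem_sdiff]
    tauto
  · intro B hB
    rw [mem_powerset] at hB
    ext x
    simp only [mem_sdiff, mem_union]
    constructor
    · rintro ⟨hx1 | hx2, hxu⟩
      · exact absurd (hA hx1) hxu
      · exact hx2
    · intro hx
      exact ⟨Or.inr hx, fun h => disjoint_right.1 hdisj (hB hx) h⟩
  · intro S hS
    rw [mem_filter] at hS
    congr 1
    rw [← hS.2]
    ext x
    simp only [mem_union, mem_inter, mem_sdiff]
    tauto

/-- key marginalization lemma for `mu` -/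
lemma mu_marginal_aux (F : Finset N → ℝ) {s : Finset N} (D : Finset N) :
    Disjoint s D → ∀ T ⊆ s,
      ∑ A ∈ (s ∪ D).powerset.filter (fun A => A ∩ s = T), mu F (s ∪ D) A = mu F s T := by
  induction D using Finset.induction_on with
  | empty =>
    intro _ T hT
    rw [union_empty]
    exact sum_filter_inter_eq _ hT
  | @insert a D ha ih =>
    intro hdisj T hT
    have hdisj' : Disjoint s D := hdisj.mono_right (subset_insert a D)
    have has : a ∉ s := fun h => (disjoint_right.1 hdisj) (mem_insert_self a D) h
    have haSD : a ∉ s ∪ D := by simp [has, ha]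
    have hunion : s ∪ insert a D = insert a (s ∪ D) := by
      simp [Finset.union_insert]
    rw [hunion, Finset.sum_filter, Finset.sum_powerset_insert haSD]
    have step : ∀ A ∈ (s ∪ D).powerset,
        ((if A ∩ s = T then mu F (insert a (s ∪ D)) A else 0)
          + (if insert a A ∩ s = T then mu F (insert a (s ∪ D)) (insert a A) else 0))
        = (if A ∩ s = T then mu F (s ∪ D) A else 0) := by
      intro A hA
      rw [mem_powerset] at hA
      have : insert a A ∩ s = A ∩ s := by
        rw [insert_inter_of_notMem has]
      rw [this]
      by_cases h : A ∩ s = T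
      · rw [if_pos h, if_pos h, if_pos h, mu_insert_step F haSD hA]
      · simp [h]
    rw [← Finset.sum_add_distrib]
    rw [Finset.sum_congr rfl step, ← Finset.sum_filter]
    exact ih hdisj' T hT

lemma mu_marginal (F : Finset N → ℝ) {s e T : Finset N} (hse : s ⊆ e) (hT : T ⊆ s) :
    ∑ A ∈ e.powerset.filter (fun A => A ∩ s = T), mu F e A = mu F s T := by
  have := mu_marginal_aux F (e \ s) disjoint_sdiff T hT
  rwa [union_sdiff_of_subset hse] at this

noncomputable def marg (lam : Finset N → ℝ) (U s T : Finset N) : ℝ :=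
  ∑ S ∈ U.powerset.filter (fun S => S ∩ s = T), lam S

lemma marg_trans (lam : Finset N → ℝ) {e u U : Finset N} (heu : e ⊆ u) (huU : u ⊆ U)
    (T : Finset N) :
    marg lam U e T = ∑ A ∈ u.powerset.filter (fun A => A ∩ e = T), marg lam U u A := by
  have hmaps : ∀ S ∈ U.powerset, S ∩ u ∈ u.powerset := fun S _ => mem_powerset.2 inter_subset_right
  have hfib := Finset.sum_fiberwise_of_maps_to hmaps (fun S => if S ∩ e = T then lam S else 0)
  rw [marg, Finset.sum_filter, ← hfib, Finset.sum_filter]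
  apply sum_congr rfl
  intro A hA
  by_cases h : A ∩ e = T
  · rw [if_pos h, marg]
    apply sum_congr rfl
    intro S hS
    rw [mem_filter] at hS
    have : S ∩ e = T := by rw [← h, ← hS.2, inter_assoc, inter_eq_right.2 heu]
    rw [if_pos this]
  · rw [if_neg h]
    apply Finset.sum_eq_zero
    intro S hS
    rw [mem_filter] at hS
    have : S ∩ e = A ∩ e := by rw [← hS.2, inter_assoc, inter_eq_right.2 heu]
    rw [this, if_neg h]

lemma marg_tower (F lam : Finset N → ℝ) {s e U : Finset N} (hse : s ⊆ e) (heU : e ⊆ U)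
    (hmarg : ∀ T ⊆ e, marg lam U e T = mu F e T) {T : Finset N} (hT : T ⊆ s) :
    marg lam U s T = mu F s T := by
  rw [marg_trans lam hse heU T]
  rw [Finset.sum_congr rfl (fun A hA => by
    rw [hmarg A (mem_powerset.1 (mem_filter.1 hA).1)])]
  exact mu_marginal F hse hT

lemma glue_step (F : Finset N → ℝ) (lam : Finset N → ℝ) {U f : Finset N}
    (hlam0 : ∀ S ∈ U.powerset, 0 ≤ lam S)
    (hmuf0 : ∀ T ⊆ f, 0 ≤ mu F f T)
    (hms : ∀ T ⊆ f ∩ U, marg lam U (f ∩ U) T = mu F (f ∩ U) T) :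
    ∃ lam' : Finset N → ℝ,
      (∀ S ∈ (U ∪ f).powerset, 0 ≤ lam' S) ∧
      (∀ A ∈ U.powerset, marg lam' (U ∪ f) U A = lam A) ∧
      (∀ T ⊆ f, marg lam' (U ∪ f) f T = mu F f T) := by
  classical
  set s := f ∩ U with hs
  have hsf : s ⊆ f := inter_subset_left
  have hsU : s ⊆ U := inter_subset_right
  set q : Finset N → ℝ := fun T => if mu F s T = 0 then 0 else (mu F s T)⁻¹ with hq
  have hmus0 : ∀ T ⊆ s, 0 ≤ mu F s T := by
    intro T hT
    rw [← hms T hT]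
    exact Finset.sum_nonneg fun S hS => hlam0 S (mem_of_mem_filter S hS)
  have hq0 : ∀ T ⊆ s, 0 ≤ q T := by
    intro T hT
    rw [hq]
    dsimp only
    split
    · exact le_refl 0
    · exact inv_nonneg.2 (hmus0 T hT)
  have hlamzero : ∀ A ∈ U.powerset, mu F s (A ∩ s) = 0 → lam A = 0 := by
    intro A hA h0
    have h1 : marg lam U s (A ∩ s) = 0 := by
      rw [hms (A ∩ s) inter_subset_right]; exact h0
    rw [marg] at h1
    exact (Finset.sum_eq_zero_iff_of_nonneg
      (fun S hS => hlam0 S (mem_of_mem_filter S hS))).1 h1 A (mem_filter.2 ⟨hA, rfl⟩)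
  have hmufzero : ∀ T ⊆ f, mu F s (T ∩ s) = 0 → mu F f T = 0 := by
    intro T hT h0
    have h1 : ∑ A ∈ f.powerset.filter (fun A => A ∩ s = T ∩ s), mu F f A = 0 := by
      rw [mu_marginal F hsf inter_subset_right]; exact h0
    exact (Finset.sum_eq_zero_iff_of_nonneg
      (fun A hA => hmuf0 A (mem_powerset.1 (mem_of_mem_filter A hA)))).1 h1 T
      (mem_filter.2 ⟨mem_powerset.2 hT, rfl⟩)
  -- basic set identities
  have hfU : f \ U = f \ s := by rw [hs, sdiff_inter_self_left]
  have hUf : U \ f = U \ s := by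
    ext x; rw [hs]; simp only [mem_sdiff, mem_inter]; tauto
  refine ⟨fun S => lam (S ∩ U) * (mu F f (S ∩ f) * q (S ∩ s)), ?_, ?_, ?_⟩
  · intro S hS
    exact mul_nonneg (hlam0 _ (mem_powerset.2 inter_subset_right))
      (mul_nonneg (hmuf0 _ inter_subset_right) (hq0 _ inter_subset_right))
  · -- marginal onto U recovers lam
    intro A hA
    rw [mem_powerset] at hA
    have hdisj : Disjoint U (f \ U) := disjoint_sdiff
    have hU' : U ∪ f = U ∪ (f \ U) := by rw [union_sdiff_self_eq_union]
    rw [marg, hU', sum_fiber_union _ hA hdisj]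
    have hterm : ∀ B ∈ (f \ U).powerset,
        lam ((A ∪ B) ∩ U) * (mu F f ((A ∪ B) ∩ f) * q ((A ∪ B) ∩ s))
          = lam A * q (A ∩ s) * mu F f ((A ∩ s) ∪ B) := by
      intro B hB
      rw [mem_powerset] at hB
      have hBU : Disjoint B U := (disjoint_sdiff.symm).mono_left hB
      have hBf : B ⊆ f := hB.trans sdiff_subset
      have e1 : (A ∪ B) ∩ U = A := by
        rw [union_inter_distrib_right, inter_eq_left.2 hA, disjoint_iff_inter_eq_empty.1 hBU, union_empty]
      have e2 : (A ∪ B) ∩ f = (A ∩ s) ∪ B := by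
        ext x
        simp only [mem_inter, mem_union, hs]
        constructor
        · rintro ⟨hx1 | hx2, hxf⟩
          · exact Or.inl ⟨hx1, hxf, hA hx1⟩
          · exact Or.inr hx2
        · rintro (⟨hx1, hxf, _⟩ | hx2)
          · exact ⟨Or.inl hx1, hxf⟩
          · exact ⟨Or.inr hx2, hBf hx2⟩
      have e3 : (A ∪ B) ∩ s = A ∩ s := by
        rw [union_inter_distrib_right, disjoint_iff_inter_eq_empty.1 (hBU.mono_right hsU), union_empty]
      rw [e1, e2, e3]; ring
    rw [Finset.sum_congr rfl hterm, ← Finset.mul_sum]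
    have hinner : ∑ B ∈ (f \ U).powerset, mu F f ((A ∩ s) ∪ B) = mu F s (A ∩ s) := by
      rw [hfU, ← sum_fiber_union (mu F f) inter_subset_right disjoint_sdiff,
        union_sdiff_of_subset hsf]
      exact mu_marginal F hsf inter_subset_right
    rw [hinner]
    by_cases h0 : mu F s (A ∩ s) = 0
    · rw [h0, mul_zero, hlamzero A (mem_powerset.2 hA) h0]
    · rw [hq]
      dsimp only
      rw [if_neg h0]
      field_simp
  · -- marginal onto f recovers mu f
    intro T hT
    have hdisj : Disjoint f (U \ f) := disjoint_sdiff
    have hU' : U ∪ f = f ∪ (U \ f) := by rw [union_sdiff_self_eq_union, union_comm]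
    rw [marg, hU', sum_fiber_union _ hT hdisj]
    have hterm : ∀ B ∈ (U \ f).powerset,
        lam ((T ∪ B) ∩ U) * (mu F f ((T ∪ B) ∩ f) * q ((T ∪ B) ∩ s))
          = mu F f T * q (T ∩ s) * lam ((T ∩ s) ∪ B) := by
      intro B hB
      rw [mem_powerset] at hB
      have hBf : Disjoint B f := (disjoint_sdiff.symm).mono_left hB
      have hBU : B ⊆ U := hB.trans sdiff_subset
      have e1 : (T ∪ B) ∩ U = (T ∩ s) ∪ B := by
        ext x
        simp only [mem_inter, mem_union, hs]
        constructor
        · rintro ⟨hx1 | hx2, hxU⟩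
          · exact Or.inl ⟨hx1, hT hx1, hxU⟩
          · exact Or.inr hx2
        · rintro (⟨hx1, _, hxU⟩ | hx2)
          · exact ⟨Or.inl hx1, hxU⟩
          · exact ⟨Or.inr hx2, hBU hx2⟩
      have e2 : (T ∪ B) ∩ f = T := by
        rw [union_inter_distrib_right, inter_eq_left.2 hT, disjoint_iff_inter_eq_empty.1 hBf, union_empty]
      have e3 : (T ∪ B) ∩ s = T ∩ s := by
        rw [union_inter_distrib_right, disjoint_iff_inter_eq_empty.1 (hBf.mono_right hsf), union_empty]
      rw [e1, e2, e3]; ring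
    rw [Finset.sum_congr rfl hterm, ← Finset.mul_sum]
    have hinner : ∑ B ∈ (U \ f).powerset, lam ((T ∩ s) ∪ B) = mu F s (T ∩ s) := by
      rw [hUf, ← sum_fiber_union lam inter_subset_right disjoint_sdiff,
        union_sdiff_of_subset hsU]
      exact hms (T ∩ s) inter_subset_right
    rw [hinner]
    by_cases h0 : mu F s (T ∩ s) = 0
    · rw [h0, mul_zero, hmufzero T hT h0]
    · rw [hq]
      dsimp only
      rw [if_neg h0]
      field_simp


-- list lemmas
lemma foldr_union_init (l : List (Finset N)) (b : Finset N) :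
    l.foldr (· ∪ ·) b = l.foldr (· ∪ ·) ∅ ∪ b := by
  induction l with
  | nil => simp
  | cons a l ih => simp only [List.foldr_cons, ih, union_assoc]

lemma subset_foldr {l : List (Finset N)} {e : Finset N} (he : e ∈ l) :
    e ⊆ l.foldr (· ∪ ·) ∅ := by
  induction l with
  | nil => simp at he
  | cons a l ih =>
    rcases List.mem_cons.1 he with h | h
    · subst h; exact subset_union_left
    · exact (ih h).trans subset_union_right

lemma foldr_subset {l : List (Finset N)} {V : Finset N} (h : ∀ e ∈ l, e ⊆ V) :
    l.foldr (· ∪ ·) ∅ ⊆ V := by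
  induction l with
  | nil => simp
  | cons a l ih =>
    simp only [List.foldr_cons]
    exact union_subset (h a List.mem_cons_self) (ih fun e he => h e (List.mem_cons_of_mem a he))

lemma take_succ_getD {l : List (Finset N)} {k : ℕ} (hk : k < l.length) :
    l.take (k + 1) = l.take k ++ [l.getD k ∅] := by
  rw [List.take_succ, List.getD_eq_getElem l ∅ hk, List.getElem?_eq_getElem hk]
  rfl



lemma ev_combo {V : Finset N} {E : Finset (Finset N)} (x y : Pt V E) {a b : ℝ}
    (hab : a + b = 1) (p : Finset N) :
    ev (a • x + b • y) p = a * ev x p + b * ev y p := by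
  simp only [ev]
  split
  · simp [mul_comm]
  · split
    · linarith
    · simp

lemma sum_sg_prod (x : N → ℝ) (U : Finset N) :
    ∑ W ∈ U.powerset, sg W * ∏ v ∈ W, x v = ∏ v ∈ U, (1 - x v) := by
  have h := Finset.prod_add (fun v => -x v) (fun _ => (1:ℝ)) U
  simp only [prod_const_one, mul_one] at h
  have h2 : ∀ v ∈ U, (1 : ℝ) - x v = -x v + 1 := fun v _ => by ring
  rw [Finset.prod_congr rfl h2, h]
  apply sum_congr rfl
  intro W hW
  have h3 : ∀ v ∈ W, -x v = (-1 : ℝ) * x v := fun v _ => by ring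
  rw [Finset.prod_congr rfl h3, Finset.prod_mul_distrib, Finset.prod_const]
  rcases Nat.even_or_odd W.card with h4 | h4
  · rw [sg, if_pos h4, h4.neg_one_pow]
  · rw [sg, if_neg (by rwa [← Nat.not_even_iff_odd] at h4), h4.neg_one_pow]

lemma mlSet_subset_cer {V : Finset N} {E : Finset (Finset N)}
    (hcard : ∀ e ∈ E, 2 ≤ e.card) (hVsub : ∀ e ∈ E, e ⊆ V) (hcl : clE E = E) :
    mlSet V E ⊆ cerSet V E E := by
  intro z hz e he U hU
  have heE : e ∈ E := (mem_filter.1 he).1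
  set x : N → ℝ := fun v => ev z {v} with hx
  have hx01 : ∀ v ∈ e, x v = 0 ∨ x v = 1 := by
    intro v hv
    have hvC : ({v} : Finset N) ∈ coords V E :=
      mem_union_right _ (mem_image.2 ⟨v, hVsub e heE hv, rfl⟩)
    have : x v = z ⟨{v}, hvC⟩ := by rw [hx]; simp only [ev]; rw [dif_pos hvC]
    rw [this]
    exact hz.1 _
  have hevempty : ev z ∅ = 1 := by
    have hnc : (∅ : Finset N) ∉ coords V E := by
      intro h
      rcases mem_union.1 h with h | h
      · have := hcard ∅ h; simp at this
      · obtain ⟨v, _, hv⟩ := mem_image.1 h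
        exact singleton_ne_empty v hv
    simp only [ev]
    rw [dif_neg hnc]; simp
  have key : ∀ p ⊆ e, ev z p = ∏ v ∈ p, x v := by
    intro p hpe
    by_cases h2 : 2 ≤ p.card
    · have hpE : p ∈ E := by
        rw [← hcl]
        exact mem_filter.2 ⟨mem_biUnion.2 ⟨e, heE, mem_powerset.2 hpe⟩, h2⟩
      exact hz.2 p hpE
    · by_cases h0 : p = ∅
      · subst h0; rw [hevempty, prod_empty]
      · have h1 : p.card = 1 := by
          have := Finset.card_pos.2 (nonempty_iff_ne_empty.2 h0)
          omega
        obtain ⟨v, rfl⟩ := Finset.card_eq_one.1 h1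
        rw [prod_singleton]
  have hterm : ∀ W ∈ U.powerset,
      (if Even W.card then (1:ℝ) else -1) * ev z ((e \ U) ∪ W)
        = (∏ v ∈ e \ U, x v) * (sg W * ∏ v ∈ W, x v) := by
    intro W hW
    rw [mem_powerset] at hW
    have hsub2 : (e \ U) ∪ W ⊆ e := union_subset sdiff_subset (hW.trans hU)
    have hdisj : Disjoint (e \ U) W := sdiff_disjoint.mono_right hW
    rw [key _ hsub2, Finset.prod_union hdisj, sg]
    ring
  rw [psi, Finset.sum_congr rfl hterm, ← Finset.mul_sum, sum_sg_prod]
  apply mul_nonneg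
  · apply prod_nonneg
    intro v hv
    rcases hx01 v (sdiff_subset hv) with h | h <;> simp [h]
  · apply prod_nonneg
    intro v hv
    rcases hx01 v (hU hv) with h | h <;> simp [h]

lemma cer_convex {V : Finset N} {E : Finset (Finset N)} : Convex ℝ (cerSet V E E) := by
  intro x hx y hy a b ha hb hab
  intro e he U hU
  have hlin : psi (a • x + b • y) U e = a * psi x U e + b * psi y U e := by
    simp only [psi]
    rw [Finset.mul_sum, Finset.mul_sum, ← Finset.sum_add_distrib]
    apply sum_congr rfl
    intro W hW
    rw [ev_combo x y hab]
    ring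
  rw [hlin]
  exact add_nonneg (mul_nonneg ha (hx e he U hU)) (mul_nonneg hb (hy e he U hU))

lemma hard_dir {V : Finset N} {E : Finset (Finset N)}
    (hcard : ∀ e ∈ E, 2 ≤ e.card) (hVsub : ∀ e ∈ E, e ⊆ V)
    (hcover : ∀ v ∈ V, ∃ e ∈ E, v ∈ e)
    (hcl : clE E = E) (hacyc : AlphaAcyclic E) :
    cerSet V E E ⊆ MP V E := by
  intro z hz
  rcases E.eq_empty_or_nonempty with hE | hEne
  · subst hE
    apply subset_convexHull
    constructor
    · intro p
      have hV : V = ∅ := eq_empty_of_forall_notMem fun v hv => by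
        obtain ⟨e, he, _⟩ := hcover v hv
        simp at he
      have := p.2
      simp [coords, hV] at this
    · intro e he
      simp at he
  -- general case
  have hnc : (∅ : Finset N) ∉ coords V E := by
    intro h
    rcases mem_union.1 h with h | h
    · have := hcard ∅ h; simp at this
    · obtain ⟨v, _, hv⟩ := mem_image.1 h
      exact singleton_ne_empty v hv
  have hevempty : ev z ∅ = 1 := by
    simp only [ev]; rw [dif_neg hnc]; simp
  -- nonnegativity of mu on maximal edges
  have hmaxmu : ∀ m ∈ maxEdges E, ∀ T ⊆ m, 0 ≤ mu (ev z) m T := by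
    intro m hm T hT
    have : mu (ev z) m T = psi z (m \ T) m := by
      simp only [mu, psi, sg, sdiff_sdiff_self_left, inter_eq_right.2 hT]
    rw [this]
    exact hz m hm (m \ T) sdiff_subset
  -- every edge lies in a maximal edge
  have hmax : ∀ e ∈ E, ∃ m ∈ maxEdges E, e ⊆ m := by
    intro e he
    obtain ⟨m, hm, hmx⟩ := (E.filter fun e' => e ⊆ e').exists_maximal
      ⟨e, mem_filter.2 ⟨he, subset_rfl⟩⟩
    rw [mem_filter] at hm
    refine ⟨m, mem_filter.2 ⟨hm.1, ?_⟩, hm.2⟩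
    intro e' he' hme'
    by_contra hne
    exact hne (le_antisymm hme' (hmx (mem_filter.2 ⟨he', hm.2.trans hme'⟩) hme'))
  have hmu0 : ∀ e ∈ E, ∀ T ⊆ e, 0 ≤ mu (ev z) e T := by
    intro e he T hT
    obtain ⟨m, hm, hem⟩ := hmax e he
    rw [← mu_marginal (ev z) hem hT]
    exact Finset.sum_nonneg fun A hA =>
      hmaxmu m hm A (mem_powerset.1 (mem_of_mem_filter A hA))
  -- the running intersection list
  obtain ⟨L, hnd, htf, hrip⟩ := hacyc
  have hLE : ∀ e ∈ L, e ∈ E := fun e he => htf ▸ List.mem_toFinset.2 he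
  have hEL : ∀ e ∈ E, e ∈ L := fun e he => List.mem_toFinset.1 (htf ▸ he)
  -- main gluing induction
  have main : ∀ k, 1 ≤ k → k ≤ L.length → ∃ lam : Finset N → ℝ,
      (∀ S ∈ ((L.take k).foldr (· ∪ ·) ∅).powerset, 0 ≤ lam S) ∧
      (∀ e ∈ L.take k, ∀ T ⊆ e, marg lam ((L.take k).foldr (· ∪ ·) ∅) e T = mu (ev z) e T) := by
    intro k
    induction k with
    | zero => omega
    | succ k ih =>
      intro _ hk1
      rcases Nat.eq_zero_or_pos k with hk0 | hkpos
      · subst hk0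
        have hlen : 0 < L.length := hk1
        have he0E : L.getD 0 ∅ ∈ E := hLE _ (by
          rw [List.getD_eq_getElem L ∅ hlen]
          exact List.getElem_mem _)
        have htake : L.take 1 = [L.getD 0 ∅] := by
          rw [take_succ_getD hlen]
          simp
        refine ⟨mu (ev z) (L.getD 0 ∅), ?_, ?_⟩
        · intro S hS
          rw [htake] at hS
          simp only [List.foldr_cons, List.foldr_nil, union_empty] at hS
          exact hmu0 _ he0E S (mem_powerset.1 hS)
        · intro e he T hT
          rw [htake] at he ⊢
          simp only [List.mem_singleton] at he
          subst he
          simp only [List.foldr_cons, List.foldr_nil, union_empty]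
          rw [marg]
          exact sum_filter_inter_eq _ hT
      · have hkl : k < L.length := hk1
        obtain ⟨lam, hlam0, hlamm⟩ := ih hkpos (le_of_lt hkl)
        set U := (L.take k).foldr (· ∪ ·) ∅ with hU
        set f := L.getD k ∅ with hf
        have hfE : f ∈ E := hLE _ (by
          rw [hf, List.getD_eq_getElem L ∅ hkl]
          exact List.getElem_mem _)
        have htake : L.take (k+1) = L.take k ++ [f] := take_succ_getD hkl
        have hU' : (L.take (k+1)).foldr (· ∪ ·) ∅ = U ∪ f := by
          rw [htake, List.foldr_append, foldr_union_init]
          simp [hU]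
        obtain ⟨j, hjk, hjsub⟩ := hrip k hkpos hkl
        have hjl : j < L.length := lt_trans hjk hkl
        have hejtake : L.getD j ∅ ∈ L.take k := by
          rw [List.getD_eq_getElem L ∅ hjl]
          have hjt : j < (L.take k).length := by
            rw [List.length_take]; omega
          have h2 : (L.take k)[j]'hjt = L[j]'hjl := List.getElem_take
          rw [← h2]
          exact List.getElem_mem _
        have hejU : L.getD j ∅ ⊆ U := subset_foldr hejtake
        have hms : ∀ T ⊆ f ∩ U, marg lam U (f ∩ U) T = mu (ev z) (f ∩ U) T :=
          fun T hT => marg_tower (ev z) lam hjsub hejU (hlamm _ hejtake) hT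
        obtain ⟨lam', h1, h2, h3⟩ := glue_step (ev z) lam hlam0
          (fun T hT => hmu0 f hfE T hT) hms
        refine ⟨lam', ?_, ?_⟩
        · rw [hU']; exact h1
        · intro e he T hT
          rw [hU']
          rw [htake] at he
          rcases List.mem_append.1 he with he | he
          · have heU : e ⊆ U := subset_foldr he
            rw [marg_trans lam' heU subset_union_left T,
              Finset.sum_congr rfl (fun A hA => h2 A (mem_filter.1 hA).1)]
            exact hlamm e he T hT
          · simp only [List.mem_singleton] at he
            subst he
            exact h3 T hT
  -- apply at k = L.length
  have hlen : 0 < L.length := by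
    rcases L with _ | ⟨a, L'⟩
    · simp at htf
      exact absurd htf.symm (Finset.nonempty_iff_ne_empty.1 hEne)
    · simp
  obtain ⟨lam, hlam0, hlamm⟩ := main L.length hlen le_rfl
  rw [List.take_length] at hlam0 hlamm
  have hUV : L.foldr (· ∪ ·) ∅ = V := by
    apply Finset.Subset.antisymm
    · exact foldr_subset fun e he => hVsub e (hLE e he)
    · intro v hv
      obtain ⟨e, heE, hve⟩ := hcover v hv
      exact subset_foldr (hEL e heE) hve
  rw [hUV] at hlam0 hlamm
  -- total mass one
  obtain ⟨e0, he0⟩ := hEne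
  have hsum1 : ∑ S ∈ V.powerset, lam S = 1 := by
    have h := marg_tower (ev z) lam (empty_subset e0) (hVsub e0 he0)
      (hlamm e0 (hEL e0 he0)) (empty_subset ∅)
    rw [mu_self, hevempty] at h
    rw [← h, marg]
    apply sum_congr _ (fun _ _ => rfl)
    rw [Finset.filter_true_of_mem]
    intro S _
    exact inter_empty S
  -- moments
  have hmom : ∀ p, p ∈ coords V E → marg lam V p p = ev z p := by
    intro p hp
    obtain ⟨e, heE, hpe⟩ : ∃ e ∈ E, p ⊆ e := by
      rcases mem_union.1 hp with h | h
      · exact ⟨p, h, subset_rfl⟩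
      · obtain ⟨v, hvV, rfl⟩ := mem_image.1 h
        obtain ⟨e, heE, hve⟩ := hcover v hvV
        exact ⟨e, heE, singleton_subset_iff.2 hve⟩
    rw [marg_tower (ev z) lam hpe (hVsub e heE) (hlamm e (hEL e heE)) subset_rfl, mu_self]
  -- the binary points
  set P : Finset N → Pt V E := fun S p => if p.1 ⊆ S then (1:ℝ) else 0 with hP
  have hPml : ∀ S ∈ V.powerset, P S ∈ mlSet V E := by
    intro S hS
    constructor
    · intro p
      by_cases h : p.1 ⊆ S
      · right; simp [hP, h]
      · left; simp [hP, h]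
    · intro e heE
      have heC : e ∈ coords V E := mem_union_left _ heE
      have hev : ev (P S) e = if e ⊆ S then (1:ℝ) else 0 := by
        simp only [ev]; rw [dif_pos heC]
      have hevv : ∀ v ∈ e, ev (P S) {v} = if v ∈ S then (1:ℝ) else 0 := by
        intro v hv
        have hvC : ({v} : Finset N) ∈ coords V E :=
          mem_union_right _ (mem_image.2 ⟨v, hVsub e heE hv, rfl⟩)
        simp only [ev]; rw [dif_pos hvC]
        simp [hP, singleton_subset_iff]
      rw [hev, Finset.prod_congr rfl hevv]
      by_cases h : e ⊆ S
      · rw [if_pos h, Finset.prod_congr rfl (fun v hv => if_pos (h hv)), prod_const_one]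
      · obtain ⟨v, hve, hvS⟩ := not_subset.1 h
        rw [if_neg h]
        exact (Finset.prod_eq_zero hve (by rw [if_neg hvS])).symm
  -- center of mass
  have hCM := Finset.centerMass_mem_convexHull V.powerset hlam0
    (by rw [hsum1]; exact one_pos) hPml
  suffices hzz : z = V.powerset.centerMass lam P by
    rw [MP, hzz]; exact hCM
  rw [Finset.centerMass, hsum1, inv_one, one_smul]
  funext p
  rw [Finset.sum_apply]
  have : ∀ S ∈ V.powerset, (lam S • P S) p = if S ∩ p.1 = p.1 then lam S else 0 := by
    intro S hS
    rw [Pi.smul_apply, smul_eq_mul, hP]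
    by_cases h : p.1 ⊆ S
    · rw [if_pos (inter_eq_right.2 h)]
      simp [h]
    · rw [if_neg (fun hc => h (inter_eq_right.1 hc))]
      simp [h]
  rw [Finset.sum_congr rfl this, ← Finset.sum_filter]
  have := hmom p.1 p.2
  rw [marg] at this
  rw [this]
  simp only [ev]
  rw [dif_pos p.2]


theorem stmt1 {N : Type*} [DecidableEq N] (V : Finset N) (E : Finset (Finset N))
    (hcard : ∀ e ∈ E, 2 ≤ e.card) (hVsub : ∀ e ∈ E, e ⊆ V)
    (hcover : ∀ v ∈ V, ∃ e ∈ E, v ∈ e)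
    (hcl : clE E = E) (hacyc : AlphaAcyclic E) :
    cerSet V E E = MP V E := by
  apply Set.Subset.antisymm
  · exact hard_dir hcard hVsub hcover hcl hacyc
  · exact convexHull_min (mlSet_subset_cer hcard hVsub hcl) cer_convex


end BPO
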